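/- Let g₀ be a natural number, let c₀ be a real number with c₀ > (3/2)·√(2g₀+2), and let d and g be integers with g ≥ 0. Assume: (i) g ≥ g₀ − c₀(1−c₀)/2 + |d|(1−|d|)/2; (ii) if d is even, then 2g + 1 ≥ |d²/2 − 1|; and (iii) for every odd prime p dividing d, 2g + 1 ≥ |((p²−1)/(2p²))·d² − 1|. Then g ≥ g₀. -/
import Mathlib
set_option maxHeartbeats 1000000


theorem stmt_4 (g₀ : ℕ) (c₀ : ℝ) (hc₀ : c₀ > (3 / 2) * Real.sqrt (2 * (g₀ : ℝ) + 2))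
    (d g : ℤ) (hg : 0 ≤ g)
    (h1 : (g : ℝ) ≥ (g₀ : ℝ) - c₀ * (1 - c₀) / 2 + |(d : ℝ)| * (1 - |(d : ℝ)|) / 2)
    (h2 : Even d → (2 * (g : ℝ) + 1) ≥ |(d : ℝ) ^ 2 / 2 - 1|)
    (h3 : ∀ p : ℕ, p.Prime → Odd p → (p : ℤ) ∣ d →
      (2 * (g : ℝ) + 1) ≥ |(((p : ℝ) ^ 2 - 1) / (2 * (p : ℝ) ^ 2)) * (d : ℝ) ^ 2 - 1|) :
    g ≥ (g₀ : ℤ) := by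
  have hg0 : (0:ℝ) ≤ (g₀:ℝ) := Nat.cast_nonneg _
  have hs := Real.sq_sqrt (by positivity : (0:ℝ) ≤ 2 * (g₀:ℝ) + 2)
  have hsn := Real.sqrt_nonneg (2 * (g₀:ℝ) + 2)
  have hc2 : c₀ ^ 2 > (9/4) * (2 * (g₀:ℝ) + 2) := by nlinarith
  have hc0 : (0:ℝ) < c₀ := by nlinarith
  have hc1 : c₀ > 1 := by nlinarith
  have habs : (0:ℝ) ≤ |(d:ℝ)| := abs_nonneg _
  by_cases hx : |(d:ℝ)| ≤ c₀
  · have : (g₀:ℝ) ≤ g := by nlinarith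
    exact_mod_cast this
  · push_neg at hx
    have hsq : |(d:ℝ)| ^ 2 = (d:ℝ) ^ 2 := sq_abs _
    have hdsq : (d:ℝ) ^ 2 > c₀ ^ 2 := by nlinarith
    have hd1 : d.natAbs ≠ 1 := by
      intro h
      have : |(d:ℝ)| = 1 := by
        rw [← Int.cast_abs, Int.abs_eq_natAbs, h]; norm_num
      nlinarith
    obtain ⟨p, hp, hpd⟩ := Nat.exists_prime_and_dvd hd1
    have hpd' : (p:ℤ) ∣ d :=
      (Int.natCast_dvd_natCast.mpr hpd).trans (Int.natAbs_dvd.mpr dvd_rfl)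
    rcases hp.eq_two_or_odd' with rfl | hodd
    · have heven : Even d := by
        obtain ⟨k, hk⟩ := hpd'
        exact ⟨k, by push_cast at hk; omega⟩
      have h2' := (le_abs_self _).trans (h2 heven)
      have : (g₀:ℝ) < g := by nlinarith
      exact_mod_cast this.le
    · have h3' := (le_abs_self _).trans (h3 p hp hodd hpd')
      have hp3 : (3:ℕ) ≤ p := by
        have := hp.two_le; have := Nat.odd_iff.mp hodd; omega
      have hq3 : (3:ℝ) ≤ (p:ℝ) := by exact_mod_cast hp3
      have hq : (0:ℝ) < 2 * (p:ℝ) ^ 2 := by positivity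
      rw [div_mul_eq_mul_div, sub_le_iff_le_add, div_le_iff₀ hq] at h3'
      have hgr : (0:ℝ) ≤ (g:ℝ) := by exact_mod_cast hg
      have : (g₀:ℝ) < g := by
        by_contra hgle
        push_neg at hgle
        have k1 : (0:ℝ) < (d:ℝ) ^ 2 - 9 / 2 * ((g:ℝ) + 1) := by nlinarith
        have k2 : (0:ℝ) < (p:ℝ) ^ 2 - 1 := by nlinarith
        have k3 : (0:ℝ) ≤ ((g:ℝ) + 1) * ((p:ℝ) ^ 2 - 9) :=
          mul_nonneg (by linarith) (by nlinarith)
        have k4 := mul_pos k1 k2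
        linarith [h3', k3, k4, sq_nonneg ((p:ℝ) * (d:ℝ))]
      exact_mod_cast this.le
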